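/- Let G = (V, E) be a finite digraph and let (V1, E1), (V2, E2) be a separation of G along a pair {u, v} of distinct vertices. If u dominates v in G and v has no incoming edge in E2 (that is, v is a source of H2), then u dominates v in H1 = (V1, E1), i.e., there is a directed path from u to v using only edges of E1. -/

import Mathlib

/-- `x` dominates `y` in the digraph with edge set `E`: there is a directed
path with at least one edge from `x` to `y`. -/
def Dominates {α : Type*} (E : Finset (α × α)) (x y : α) : Prop :=
  Relation.TransGen (fun a b => (a, b) ∈ E) x y

/-- A separation of the finite digraph `(V, E)` along the pair `{u, v}` of
distinct vertices into `H1 = (V1, E1)` and `H2 = (V2, E2)`. -/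
structure Separation {α : Type*} [DecidableEq α] (V : Finset α) (E : Finset (α × α))
    (u v : α) (V1 V2 : Finset α) (E1 E2 : Finset (α × α)) : Prop where
  ne : u ≠ v
  vUnion : V1 ∪ V2 = V
  vInter : V1 ∩ V2 = {u, v}
  eDisjoint : Disjoint E1 E2
  eUnion : E1 ∪ E2 = E
  mem1 : ∀ e ∈ E1, e.1 ∈ V1 ∧ e.2 ∈ V1
  mem2 : ∀ e ∈ E2, e.1 ∈ V2 ∧ e.2 ∈ V2

/-- If `u` dominates `v` in `G` and `v` has no incoming edge in `E2`, then
`u` dominates `v` in `H1`, i.e. via a directed path using only edges of `E1`. -/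
theorem stmt3 {α : Type*} [DecidableEq α] (V V1 V2 : Finset α)
    (E E1 E2 : Finset (α × α)) (u v : α)
    (hsep : Separation V E u v V1 V2 E1 E2)
    (hdom : Dominates E u v)
    (hvsrc : ∀ e ∈ E2, e.2 ≠ v) :
    Dominates E1 u v := by
  have key : ∀ x, Relation.TransGen (fun a b => (a, b) ∈ E) x v →
      Relation.TransGen (fun a b => (a, b) ∈ E1) u v ∨
      (x ∈ V1 ∧ Relation.TransGen (fun a b => (a, b) ∈ E1) x v) := by
    intro x hx
    induction hx using Relation.TransGen.head_induction_on with
    | single h =>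
      rw [← hsep.eUnion, Finset.mem_union] at h
      rcases h with h | h
      · exact Or.inr ⟨(hsep.mem1 _ h).1, Relation.TransGen.single h⟩
      · exact absurd rfl (hvsrc _ h)
    | @head a c h _ IH =>
      rcases IH with done | ⟨hc1, hcv⟩
      · exact Or.inl done
      rw [← hsep.eUnion, Finset.mem_union] at h
      rcases h with h | h
      · exact Or.inr ⟨(hsep.mem1 _ h).1, Relation.TransGen.head h hcv⟩
      · have hc2 : c ∈ V2 := (hsep.mem2 _ h).2
        have : c ∈ ({u, v} : Finset α) := by
          rw [← hsep.vInter]; exact Finset.mem_inter.mpr ⟨hc1, hc2⟩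
        rcases Finset.mem_insert.mp this with rfl | hcv'
        · exact Or.inl hcv
        · rw [Finset.mem_singleton] at hcv'
          subst hcv'
          exact absurd rfl (hvsrc _ h)
  rcases key u hdom with h | ⟨_, h⟩ <;> exact h
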